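/- For every k ∈ {1,…,n} one has C(λ_k) = (|g| · A′(λ_k)/m) · Σ_{j=1}^{n} Q̃_{(0,j),(m−1,k)}, where Q̃_{(0,j),(m−1,k)} denotes the entry of Q̃ in row (0,j) and column (m−1,k). In particular, if |g| ≠ 0, then C(λ_k)/(|g|·A′(λ_k)) = (1/m)·Σ_{j=1}^{n} Q̃_{(0,j),(m−1,k)}. -/

import Mathlib

open Matrix BigOperators

noncomputable section

/-- The block matrix `L̃` with diagonal blocks `Λ = diag(λ₁,…,λₙ)` at positions `(h, h+1)`:
its entry in row `(h,j)` and column `(i,k)` is `λⱼ` if `k = j` and `i = h + 1` in `ℤ/mℤ`,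
and `0` otherwise. -/
def Ltilde (m n : ℕ) (lam : Fin n → ℂ) :
    Matrix (ZMod m × Fin n) (ZMod m × Fin n) ℂ :=
  Matrix.of fun p q => if q.2 = p.2 ∧ q.1 = p.1 + 1 then lam p.2 else 0

/-- `|g| = g₀ + g₁ + ⋯ + g_{m-1}`. -/
def gAbs (m : ℕ) (g : ZMod m → ℂ) : ℂ :=
  ∑ s ∈ Finset.range m, g (s : ZMod m)

/-- `cᵢ = Σ_{r=0}^{i} g_r − Σ_{s=0}^{m−1} ((m−s)/m)·g_s`, the index `i` read modulo `m`. -/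
def cConst (m : ℕ) (g : ZMod m → ℂ) (i : ZMod m) : ℂ :=
  (∑ r ∈ Finset.range (i.val + 1), g (r : ZMod m)) -
    ∑ s ∈ Finset.range m, (((m : ℂ) - (s : ℂ)) / (m : ℂ)) * g (s : ZMod m)

/-- The (spinless) matrix `Q̃`: its entry in row `(h,j)` and column `(i,k)` vanishes unless
`h = i + 1` in `ℤ/mℤ`, in which case it equals `φⱼ + cᵢ/λⱼ` if `k = j`, and
`−|g|·λⱼ^{m−i−1}·λₖ^{i}/(λⱼ^m − λₖ^m)` if `k ≠ j` (where `i` is taken as its representative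
in `{0,…,m−1}`). -/
def Qtilde (m n : ℕ) (g : ZMod m → ℂ) (lam phi : Fin n → ℂ) :
    Matrix (ZMod m × Fin n) (ZMod m × Fin n) ℂ :=
  Matrix.of fun p q =>
    if p.1 = q.1 + 1 then
      if q.2 = p.2 then phi p.2 + cConst m g q.1 / lam p.2
      else -(gAbs m g) * lam p.2 ^ (m - q.1.val - 1) * lam q.2 ^ q.1.val /
        (lam p.2 ^ m - lam q.2 ^ m)
    else 0

/-- `A(z) = det(z·1 − L̃)`. -/
def Afun (m n : ℕ) [NeZero m] (lam : Fin n → ℂ) (z : ℂ) : ℂ :=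
  (z • (1 : Matrix (ZMod m × Fin n) (ZMod m × Fin n) ℂ) - Ltilde m n lam).det

/-- `D(z) = tr(Q̃ · adj(z·1 − L̃))`. -/
def Dfun (m n : ℕ) [NeZero m] (g : ZMod m → ℂ) (lam phi : Fin n → ℂ) (z : ℂ) : ℂ :=
  Matrix.trace (Qtilde m n g lam phi *
    (z • (1 : Matrix (ZMod m × Fin n) (ZMod m × Fin n) ℂ) - Ltilde m n lam).adjugate)

/-- `C(z) = w̃ · Q̃ · adj(z·1 − L̃) · ṽ`, where `ṽ` has entry `1` at each index `(0,j)` and `0`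
elsewhere, and `w̃` has entry `|g|` at each index `(0,j)` and `0` elsewhere. -/
def Cfun (m n : ℕ) [NeZero m] (g : ZMod m → ℂ) (lam phi : Fin n → ℂ) (z : ℂ) : ℂ :=
  (fun p : ZMod m × Fin n => if p.1 = 0 then gAbs m g else 0) ⬝ᵥ
    ((Qtilde m n g lam phi *
        (z • (1 : Matrix (ZMod m × Fin n) (ZMod m × Fin n) ℂ) - Ltilde m n lam).adjugate) *ᵥ
      fun p : ZMod m × Fin n => if p.1 = 0 then (1 : ℂ) else 0)


namespace CfunProof
set_option linter.unusedSectionVars false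

/-- The shift block. -/
def S (m : ℕ) (l : ℂ) : Matrix (ZMod m) (ZMod m) ℂ :=
  Matrix.of fun h i => if i = h + 1 then l else 0

/-- Candidate adjugate block. -/
def K (m : ℕ) (z l : ℂ) : Matrix (ZMod m) (ZMod m) ℂ :=
  Matrix.of fun h i => z ^ (m - 1 - (i - h).val) * l ^ (i - h).val

lemma zmod_val_sub_one {m : ℕ} [NeZero m] {x : ZMod m} (hx : x ≠ 0) :
    (x - 1).val = x.val - 1 := by
  have h1 : 0 < x.val := ZMod.val_pos.mpr hx
  have h2 : x.val < m := ZMod.val_lt x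
  have hx' : ((x.val - 1 : ℕ) : ZMod m) = x - 1 := by
    have hv : ((x.val : ℕ) : ZMod m) = x := ZMod.natCast_rightInverse x
    push_cast [Nat.cast_sub h1]
    rw [hv]
  rw [← hx', ZMod.val_cast_of_lt (by omega)]

lemma smul_one_sub_S_mul_K {m : ℕ} [NeZero m] (z l : ℂ) :
    (z • (1 : Matrix (ZMod m) (ZMod m) ℂ) - S m l) * K m z l
      = (z ^ m - l ^ m) • (1 : Matrix (ZMod m) (ZMod m) ℂ) := by
  obtain ⟨m', rfl⟩ : ∃ m', m = m' + 1 := ⟨m - 1, by have := NeZero.pos m; omega⟩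
  set m := m' + 1
  ext h i
  rw [Matrix.mul_apply]
  have key : ∀ x : ZMod m, ((z • (1 : Matrix (ZMod m) (ZMod m) ℂ) - S m l) h x) * K m z l x i
      = (if h = x then z * K m z l x i else 0) - (if x = h + 1 then l * K m z l x i else 0) := by
    intro x
    simp only [Matrix.sub_apply, Matrix.smul_apply, Matrix.one_apply, S, Matrix.of_apply,
      smul_eq_mul]
    split_ifs <;> ring
  rw [Finset.sum_congr rfl fun x _ => key x, Finset.sum_sub_distrib,
    Finset.sum_ite_eq _ h, Finset.sum_ite_eq' _ (h + 1)]
  simp only [Finset.mem_univ, if_true, Matrix.smul_apply, Matrix.one_apply, smul_eq_mul]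
  by_cases hih : i = h
  · subst hih
    have e1 : (i - i).val = 0 := by rw [sub_self, ZMod.val_zero]
    have e2 : (i - (i + 1)).val = m - 1 := by
      have : i - (i + 1) = (-1 : ZMod m) := by ring
      rw [this]
      exact ZMod.val_neg_one m'
    simp only [K, Matrix.of_apply, e1, e2, pow_zero, mul_one, one_mul, Nat.sub_self,
      Nat.sub_zero, if_true]
    have hm1 : m - 1 = m' := rfl
    rw [hm1, show z * z ^ m' = z ^ m from (pow_succ' z m').symm,
      show l * l ^ m' = l ^ m from (pow_succ' l m').symm]
  · have hx : i - h ≠ 0 := sub_ne_zero.mpr hih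
    set r := (i - h).val with hr
    have h1r : 0 < r := ZMod.val_pos.mpr hx
    have hrm : r < m := ZMod.val_lt _
    have e3 : (i - (h + 1)).val = r - 1 := by
      have : i - (h + 1) = (i - h) - 1 := by ring
      rw [this, zmod_val_sub_one hx]
    simp only [K, Matrix.of_apply, e3, ← hr]
    rw [if_neg (fun hcon => hih hcon.symm), mul_zero]
    have e4 : m - 1 - (r - 1) = m - r := by omega
    have e5 : z * z ^ (m - 1 - r) = z ^ (m - r) := by
      rw [← pow_succ']; congr 1; omega
    have e6 : l * l ^ (r - 1) = l ^ r := by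
      rw [← pow_succ']; congr 1; omega
    rw [e4]
    calc z * (z ^ (m - 1 - r) * l ^ r) - l * (z ^ (m - r) * l ^ (r - 1))
        = (z * z ^ (m - 1 - r)) * l ^ r - z ^ (m - r) * (l * l ^ (r - 1)) := by ring
      _ = 0 := by rw [e5, e6]; ring


lemma detS {m : ℕ} [NeZero m] (z l : ℂ) :
    (z • (1 : Matrix (ZMod m) (ZMod m) ℂ) - S m l).det = z ^ m - l ^ m := by
  rcases eq_or_ne m 1 with rfl | hm1
  · haveI : Unique (ZMod 1) := inferInstanceAs (Unique (Fin 1))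
    rw [Matrix.det_unique]
    have h01 : (default : ZMod 1) = default + 1 := Subsingleton.elim _ _
    simp only [Matrix.sub_apply, Matrix.smul_apply, Matrix.one_apply_eq, smul_eq_mul, mul_one,
      S, Matrix.of_apply, pow_one]
    split_ifs with hif
    · rfl
    · exact absurd (Subsingleton.elim _ _) hif
  · have hm : 2 ≤ m := by have := NeZero.pos m; omega
    haveI : Fact (1 < m) := ⟨hm⟩
    have h10 : (1 : ZMod m) ≠ 0 := one_ne_zero
    set τ : Equiv.Perm (ZMod m) := Equiv.addRight (-1 : ZMod m) with hτ
    have hτapp : ∀ y : ZMod m, τ y = y - 1 := by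
      intro y; simp [hτ, sub_eq_add_neg]
    -- classification
    have hclass : ∀ σ : Equiv.Perm (ZMod m), σ ≠ 1 → σ ≠ τ →
        ∃ i, σ i ≠ i ∧ σ i ≠ i - 1 := by
      intro σ hσ1 hστ
      by_contra hc
      push_neg at hc
      obtain ⟨i0, hi0⟩ : ∃ i0, σ i0 ≠ i0 - 1 := by
        by_contra hall
        push_neg at hall
        exact hστ (Equiv.ext fun y => by rw [hall y, hτapp])
      have hfix : σ i0 = i0 := by
        by_contra hne
        exact hi0 (hc i0 hne)
      obtain ⟨i1, hi1⟩ : ∃ i1, σ i1 ≠ i1 := by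
        by_contra hall
        push_neg at hall
        exact hσ1 (Equiv.ext fun y => hall y)
      have key : ∀ k : ℕ, σ (i0 + (k : ZMod m)) = i0 + (k : ZMod m) := by
        intro k
        induction k with
        | zero => simpa using hfix
        | succ k ih =>
          have hk1 : ((k + 1 : ℕ) : ZMod m) = (k : ZMod m) + 1 := by push_cast; ring
          rw [hk1, ← add_assoc]
          set y := i0 + (k : ZMod m) with hy
          have hy1 : y + 1 ≠ y := fun hcon => h10 (by linear_combination hcon)
          rcases em (σ (y + 1) = y + 1) with h | h
          · exact h
          · have h2 : σ (y + 1) = σ y := by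
              rw [hc _ h, ih]; ring
            exact absurd (σ.injective h2) hy1
      have := key (i1 - i0).val
      rw [ZMod.natCast_rightInverse (i1 - i0)] at this
      have h4 : i0 + (i1 - i0) = i1 := by ring
      rw [h4] at this
      exact hi1 this
    -- vanishing off {1, τ}
    have hzero : ∀ σ ∈ (Finset.univ : Finset (Equiv.Perm (ZMod m))),
        σ ∉ ({1, τ} : Finset (Equiv.Perm (ZMod m))) →
        Equiv.Perm.sign σ • ∏ i, (z • (1 : Matrix (ZMod m) (ZMod m) ℂ) - S m l) (σ i) i = 0 := by
      intro σ _ hσ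
      simp only [Finset.mem_insert, Finset.mem_singleton] at hσ
      push_neg at hσ
      obtain ⟨i, hi1, hi2⟩ := hclass σ hσ.1 hσ.2
      have hent : (z • (1 : Matrix (ZMod m) (ZMod m) ℂ) - S m l) (σ i) i = 0 := by
        simp only [Matrix.sub_apply, Matrix.smul_apply, Matrix.one_apply, S, Matrix.of_apply,
          smul_eq_mul]
        rw [if_neg hi1, if_neg (fun hcon : i = σ i + 1 =>
          hi2 (by linear_combination -hcon))]
        ring
      rw [Finset.prod_eq_zero (f := fun j : ZMod m =>
        (z • (1 : Matrix (ZMod m) (ZMod m) ℂ) - S m l) (σ j) j) (Finset.mem_univ i) hent,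
        smul_zero]
    have hne1τ : (1 : Equiv.Perm (ZMod m)) ≠ τ := by
      intro hcon
      have : (0 : ZMod m) = 0 + -1 := by
        conv_lhs => rw [show (0 : ZMod m) = (1 : Equiv.Perm (ZMod m)) 0 from rfl, hcon]
        rfl
      exact h10 (by linear_combination this)
    rw [Matrix.det_apply, ← Finset.sum_subset (Finset.subset_univ ({1, τ} : Finset _)) hzero,
      Finset.sum_pair hne1τ]
    -- identity term
    have hid : ∀ i : ZMod m, (z • (1 : Matrix (ZMod m) (ZMod m) ℂ) - S m l) i i = z := by
      intro i
      simp only [Matrix.sub_apply, Matrix.smul_apply, Matrix.one_apply_eq, smul_eq_mul, mul_one,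
        S, Matrix.of_apply]
      rw [if_neg (fun hcon : i = i + 1 => h10 (by linear_combination -hcon))]
      ring
    have hidterm : Equiv.Perm.sign (1 : Equiv.Perm (ZMod m)) •
        ∏ i, (z • (1 : Matrix (ZMod m) (ZMod m) ℂ) - S m l) ((1 : Equiv.Perm (ZMod m)) i) i
          = z ^ m := by
      simp only [Equiv.Perm.sign_one, one_smul, Equiv.Perm.one_apply]
      rw [Finset.prod_congr rfl fun i _ => hid i, Finset.prod_const, Finset.card_univ, ZMod.card]
    -- cycle term
    have hcyc : τ.IsCycle := by
      refine ⟨0, ?_, fun y hy => ?_⟩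
      · rw [hτapp]
        intro hcon
        exact h10 (by linear_combination -hcon)
      · refine ⟨-(y.val : ℤ), ?_⟩
        rw [hτ]
        have hpow : ∀ (a : ZMod m) (k : ℤ), Equiv.addRight a ^ k = Equiv.addRight (k • a) := by
          intro a k
          induction k using Int.induction_on with
          | zero => ext x; simp
          | succ i ih => rw [_root_.zpow_add_one, ih]; ext x; simp [add_smul, add_assoc]; ring
          | pred i ih =>
            rw [_root_.zpow_sub_one, ih]; ext x; simp [sub_smul, sub_eq_add_neg, add_assoc]; ring
        rw [hpow]
        simp only [Equiv.coe_addRight, zero_add]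
        rw [zsmul_eq_mul]
        push_cast
        rw [ZMod.natCast_rightInverse y]
        ring
    have hsupp : τ.support = Finset.univ := by
      ext y
      simp only [Equiv.Perm.mem_support, Finset.mem_univ, iff_true, hτapp]
      intro hcon
      exact h10 (by linear_combination -hcon)
    have hsign : Equiv.Perm.sign τ = -(-1) ^ m := by
      rw [hcyc.sign, hsupp, Finset.card_univ, ZMod.card]
    have hτent : ∀ i : ZMod m, (z • (1 : Matrix (ZMod m) (ZMod m) ℂ) - S m l) (τ i) i = -l := by
      intro i
      rw [hτapp]
      simp only [Matrix.sub_apply, Matrix.smul_apply, Matrix.one_apply, S, Matrix.of_apply,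
        smul_eq_mul]
      rw [if_neg (fun hcon : i - 1 = i => h10 (by linear_combination -hcon)),
        if_pos (show i = i - 1 + 1 by ring)]
      ring
    have hτterm : Equiv.Perm.sign τ •
        ∏ i, (z • (1 : Matrix (ZMod m) (ZMod m) ℂ) - S m l) (τ i) i = -l ^ m := by
      rw [Finset.prod_congr rfl fun i _ => hτent i, Finset.prod_const, Finset.card_univ,
        ZMod.card, hsign]
      rw [Units.smul_def]
      push_cast
      rw [zsmul_eq_mul]
      push_cast
      rw [neg_pow l, ← mul_assoc]
      have : ((-1 : ℂ)) ^ m * (-1 : ℂ) ^ m = 1 := by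
        rw [← pow_add, ← two_mul, pow_mul]
        norm_num
      rw [neg_mul, this]
      ring
    rw [hidterm, hτterm]
    ring


variable {m n : ℕ} [NeZero m]

lemma Ltilde_eq (lam : Fin n → ℂ) :
    Ltilde m n lam = blockDiagonal (fun j => S m (lam j)) := by
  ext ⟨h, j⟩ ⟨i, k⟩
  rw [Ltilde, Matrix.of_apply, Matrix.blockDiagonal_apply]
  by_cases hjk : k = j
  · subst hjk
    by_cases hih : i = h + 1 <;> simp [S, hih]
  · rw [if_neg (fun hand => hjk hand.1), if_neg (Ne.symm hjk)]

lemma B_eq (lam : Fin n → ℂ) (z : ℂ) :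
    z • (1 : Matrix (ZMod m × Fin n) (ZMod m × Fin n) ℂ) - Ltilde m n lam
      = blockDiagonal (fun j => z • (1 : Matrix (ZMod m) (ZMod m) ℂ) - S m (lam j)) := by
  have h1 : (fun j : Fin n => z • (1 : Matrix (ZMod m) (ZMod m) ℂ) - S m (lam j))
      = (z • (1 : Fin n → Matrix (ZMod m) (ZMod m) ℂ) - fun j => S m (lam j)) := rfl
  rw [Ltilde_eq, h1, Matrix.blockDiagonal_sub, Matrix.blockDiagonal_smul,
    Matrix.blockDiagonal_one]

lemma Afun_eq (lam : Fin n → ℂ) (z : ℂ) :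
    Afun m n lam z = ∏ j : Fin n, (z ^ m - lam j ^ m) := by
  rw [Afun, B_eq, Matrix.det_blockDiagonal]
  exact Finset.prod_congr rfl fun j _ => detS z (lam j)

lemma hasDerivAt_Afun (lam : Fin n → ℂ) (x : ℂ) :
    HasDerivAt (Afun m n lam)
      (∑ j : Fin n, (∏ l ∈ Finset.univ.erase j, (x ^ m - lam l ^ m)) *
        ((m : ℂ) * x ^ (m - 1))) x := by
  have h : ∀ j ∈ (Finset.univ : Finset (Fin n)),
      HasDerivAt (fun z : ℂ => z ^ m - lam j ^ m) ((m : ℂ) * x ^ (m - 1)) x :=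
    fun j _ => (hasDerivAt_pow m x).sub_const _
  have h2 := HasDerivAt.fun_finsetProd h
  have hfun : (fun z : ℂ => ∏ j ∈ (Finset.univ : Finset (Fin n)), (z ^ m - lam j ^ m))
      = Afun m n lam := funext fun z => (Afun_eq lam z).symm
  rw [hfun] at h2
  simpa [smul_eq_mul] using h2

lemma deriv_Afun (lam : Fin n → ℂ) (k : Fin n) :
    deriv (Afun m n lam) (lam k)
      = (m : ℂ) * lam k ^ (m - 1) * ∏ l ∈ Finset.univ.erase k, (lam k ^ m - lam l ^ m) := by
  rw [(hasDerivAt_Afun lam (lam k)).deriv, Finset.sum_eq_single k]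
  · ring
  · intro j _ hjk
    rw [Finset.prod_eq_zero (f := fun l => lam k ^ m - lam l ^ m)
      (Finset.mem_erase.mpr ⟨hjk.symm, Finset.mem_univ k⟩) (sub_self (lam k ^ m)), zero_mul]
  · intro h; exact absurd (Finset.mem_univ k) h

lemma adjugate_eq (lam : Fin n → ℂ) (z : ℂ) (hz : ∀ l, z ^ m ≠ lam l ^ m) :
    (z • (1 : Matrix (ZMod m × Fin n) (ZMod m × Fin n) ℂ) - Ltilde m n lam).adjugate
      = blockDiagonal (fun j =>
          (∏ l ∈ Finset.univ.erase j, (z ^ m - lam l ^ m)) • K m z (lam j)) := by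
  set B := z • (1 : Matrix (ZMod m × Fin n) (ZMod m × Fin n) ℂ) - Ltilde m n lam with hB
  set N := blockDiagonal (fun j : Fin n =>
      (∏ l ∈ Finset.univ.erase j, (z ^ m - lam l ^ m)) • K m z (lam j)) with hN
  have hdet : B.det = ∏ j : Fin n, (z ^ m - lam j ^ m) := Afun_eq lam z
  have hd0 : B.det ≠ 0 := by
    rw [hdet]
    exact Finset.prod_ne_zero_iff.mpr fun j _ => sub_ne_zero.mpr (hz j)
  have hBN : B * N = B.det • 1 := by
    rw [hdet, hB, B_eq, hN, ← Matrix.blockDiagonal_mul]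
    have hblock : ∀ j : Fin n,
        (z • (1 : Matrix (ZMod m) (ZMod m) ℂ) - S m (lam j)) *
          ((∏ l ∈ Finset.univ.erase j, (z ^ m - lam l ^ m)) • K m z (lam j))
        = (∏ j : Fin n, (z ^ m - lam j ^ m)) • (1 : Matrix (ZMod m) (ZMod m) ℂ) := by
      intro j
      rw [Matrix.mul_smul, smul_one_sub_S_mul_K, smul_smul,
        Finset.prod_erase_mul _ _ (Finset.mem_univ j)]
    rw [funext hblock]
    have h2 : (fun _ : Fin n => (∏ j : Fin n, (z ^ m - lam j ^ m)) •
        (1 : Matrix (ZMod m) (ZMod m) ℂ))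
        = (∏ j : Fin n, (z ^ m - lam j ^ m)) • (1 : Fin n → Matrix (ZMod m) (ZMod m) ℂ) := rfl
    rw [h2, Matrix.blockDiagonal_smul, Matrix.blockDiagonal_one]
  have hu : IsUnit B.det := isUnit_iff_ne_zero.mpr hd0
  calc B.adjugate = 1 * B.adjugate := (one_mul _).symm
    _ = (B⁻¹ * B) * B.adjugate := by rw [Matrix.nonsing_inv_mul B hu]
    _ = B⁻¹ * (B * B.adjugate) := Matrix.mul_assoc _ _ _
    _ = B⁻¹ * (B * N) := by rw [Matrix.mul_adjugate, hBN]
    _ = (B⁻¹ * B) * N := (Matrix.mul_assoc _ _ _).symm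
    _ = N := by rw [Matrix.nonsing_inv_mul B hu, one_mul]


def Ffun (g : ZMod m → ℂ) (lam phi : Fin n → ℂ) (z : ℂ) : ℂ :=
  (fun p : ZMod m × Fin n => if p.1 = 0 then gAbs m g else 0) ⬝ᵥ
    ((Qtilde m n g lam phi * blockDiagonal (fun j =>
        (∏ l ∈ Finset.univ.erase j, (z ^ m - lam l ^ m)) • K m z (lam j))) *ᵥ
      fun p : ZMod m × Fin n => if p.1 = 0 then (1 : ℂ) else 0)

lemma Cfun_continuous (g : ZMod m → ℂ) (lam phi : Fin n → ℂ) :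
    Continuous (Cfun m n g lam phi) := by
  have hB : Continuous fun z : ℂ =>
      z • (1 : Matrix (ZMod m × Fin n) (ZMod m × Fin n) ℂ) - Ltilde m n lam :=
    (continuous_id.smul continuous_const).sub continuous_const
  exact continuous_const.dotProduct
    ((continuous_const.matrix_mul hB.matrix_adjugate).matrix_mulVec continuous_const)

lemma Ffun_continuous (g : ZMod m → ℂ) (lam phi : Fin n → ℂ) :
    Continuous (Ffun g lam phi) := by
  have hK : Continuous fun z : ℂ => blockDiagonal (fun j : Fin n =>
      (∏ l ∈ Finset.univ.erase j, (z ^ m - lam l ^ m)) • K m z (lam j)) := by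
    apply Continuous.matrix_blockDiagonal
    apply continuous_pi
    intro j
    refine Continuous.smul (f := fun a : ℂ => ∏ l ∈ Finset.univ.erase j, (a ^ m - lam l ^ m))
      (g := fun a : ℂ => K m a (lam j)) ?_ ?_
    · exact continuous_finset_prod _ fun l _ => (continuous_pow m).sub continuous_const
    · exact continuous_matrix fun h i => (continuous_pow _).mul continuous_const
  exact continuous_const.dotProduct
    ((continuous_const.matrix_mul hK).matrix_mulVec continuous_const)

lemma Cfun_eq_Ffun (g : ZMod m → ℂ) (lam phi : Fin n → ℂ) :
    Cfun m n g lam phi = Ffun g lam phi := by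
  have hbad : Set.Countable {z : ℂ | ¬ ∀ l, z ^ m ≠ lam l ^ m} := by
    have hsub : {z : ℂ | ¬ ∀ l, z ^ m ≠ lam l ^ m} ⊆
        ⋃ l : Fin n, {z : ℂ | z ^ m = lam l ^ m} := by
      intro z hz
      simp only [Set.mem_setOf_eq] at hz
      push_neg at hz
      obtain ⟨l, hl⟩ := hz
      exact Set.mem_iUnion.mpr ⟨l, hl⟩
    refine Set.Countable.mono hsub (Set.countable_iUnion fun l => Set.Finite.countable ?_)
    have hp : (Polynomial.X ^ m - Polynomial.C (lam l ^ m) : Polynomial ℂ) ≠ 0 :=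
      Polynomial.X_pow_sub_C_ne_zero (NeZero.pos m) _
    refine Set.Finite.subset (Polynomial.finite_setOf_isRoot hp) ?_
    intro z hz
    simp only [Set.mem_setOf_eq] at hz
    simp only [Set.mem_setOf_eq, Polynomial.IsRoot, Polynomial.eval_sub, Polynomial.eval_pow,
      Polynomial.eval_X, Polynomial.eval_C]
    exact sub_eq_zero.mpr hz
  have hdense : Dense {z : ℂ | ∀ l, z ^ m ≠ lam l ^ m} := by
    have h1 := Set.Countable.dense_compl ℂ hbad
    have h2 : {z : ℂ | ¬ ∀ l, z ^ m ≠ lam l ^ m}ᶜ = {z : ℂ | ∀ l, z ^ m ≠ lam l ^ m} := by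
      ext z
      simp [Set.mem_compl_iff]
    rwa [h2] at h1
  refine Continuous.ext_on hdense (Cfun_continuous g lam phi) (Ffun_continuous g lam phi) ?_
  intro z hz
  simp only [Set.mem_setOf_eq] at hz
  unfold Cfun Ffun
  rw [adjugate_eq lam z hz]

lemma Ffun_at (g : ZMod m → ℂ) (lam phi : Fin n → ℂ) (k : Fin n) :
    Ffun g lam phi (lam k)
      = gAbs m g * ((∏ l ∈ Finset.univ.erase k, (lam k ^ m - lam l ^ m)) * lam k ^ (m - 1) *
          ∑ j : Fin n, Qtilde m n g lam phi (0, j) (-1, k)) := by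
  set P : Fin n → ℂ := fun j => ∏ l ∈ Finset.univ.erase j, ((lam k) ^ m - lam l ^ m) with hP
  have hPj : ∀ j : Fin n, j ≠ k → P j = 0 := by
    intro j hjk
    exact Finset.prod_eq_zero (f := fun l => lam k ^ m - lam l ^ m)
      (Finset.mem_erase.mpr ⟨hjk.symm, Finset.mem_univ k⟩) (sub_self (lam k ^ m))
  set Q : Matrix (ZMod m × Fin n) (ZMod m × Fin n) ℂ := Qtilde m n g lam phi with hQ
  set BD : Matrix (ZMod m × Fin n) (ZMod m × Fin n) ℂ := blockDiagonal (fun j =>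
      P j • K m (lam k) (lam j)) with hBD
  -- step 1 : unfold to double sums
  set v : ZMod m × Fin n → ℂ := fun p => if p.1 = 0 then (1 : ℂ) else 0 with hv
  set u : ZMod m × Fin n → ℂ := (Q * BD) *ᵥ v with hu
  have step1 : Ffun g lam phi (lam k) = ∑ j : Fin n, gAbs m g * u (0, j) := by
    unfold Ffun
    calc ∑ p : ZMod m × Fin n, (if p.1 = 0 then gAbs m g else 0) * u p
        = ∑ h : ZMod m, ∑ j : Fin n, (if h = 0 then gAbs m g else 0) * u (h, j) := by
          rw [Fintype.sum_prod_type]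
      _ = ∑ h : ZMod m, (if h = 0 then ∑ j : Fin n, gAbs m g * u (h, j) else 0) := by
          refine Finset.sum_congr rfl fun h _ => ?_
          by_cases h0 : h = 0
          · subst h0; simp
          · simp [h0]
      _ = ∑ j : Fin n, gAbs m g * u (0, j) := by
          rw [Finset.sum_ite_eq' Finset.univ (0 : ZMod m)]
          simp
  -- step 2 : the mulVec against v picks the column blocks (0, k')
  have step2 : ∀ j : Fin n, u (0, j) = ∑ k' : Fin n, (Q * BD) (0, j) (0, k') := by
    intro j
    calc u (0, j) = ∑ q : ZMod m × Fin n, (Q * BD) (0, j) q * v q := by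
          rw [hu, Matrix.mulVec, dotProduct]
      _ = ∑ i : ZMod m, ∑ k' : Fin n, (Q * BD) (0, j) (i, k') * v (i, k') := by
          rw [Fintype.sum_prod_type]
      _ = ∑ i : ZMod m, (if i = 0 then ∑ k' : Fin n, (Q * BD) (0, j) (i, k') else 0) := by
          refine Finset.sum_congr rfl fun i _ => ?_
          by_cases h0 : i = 0
          · subst h0; simp [hv]
          · simp [hv, h0]
      _ = ∑ k' : Fin n, (Q * BD) (0, j) (0, k') := by
          rw [Finset.sum_ite_eq' Finset.univ (0 : ZMod m)]
          simp
  -- step 3 : compute (Q * BD) (0,j) (0,k')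
  have step3 : ∀ (j k' : Fin n), (Q * BD) (0, j) (0, k')
      = ∑ h : ZMod m, Q (0, j) (h, k') * (P k' * K m (lam k) (lam k') h 0) := by
    intro j k'
    rw [Matrix.mul_apply, Fintype.sum_prod_type]
    refine Finset.sum_congr rfl fun h _ => ?_
    have : ∀ j' : Fin n, Q (0, j) (h, j') * BD (h, j') (0, k')
        = if j' = k' then Q (0, j) (h, j') * (P j' * K m (lam k) (lam j') h 0) else 0 := by
      intro j'
      rw [hBD, Matrix.blockDiagonal_apply]
      by_cases hj' : j' = k'
      · simp [hj']
      · simp [hj']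
    rw [Finset.sum_congr rfl fun j' _ => this j', Finset.sum_ite_eq' Finset.univ k']
    simp
  -- step 4 : only k' = k survives
  have step4 : ∀ j : Fin n, (∑ k' : Fin n, (Q * BD) (0, j) (0, k'))
      = ∑ h : ZMod m, Q (0, j) (h, k) * (P k * K m (lam k) (lam k) h 0) := by
    intro j
    rw [Finset.sum_congr rfl fun k' _ => step3 j k', Finset.sum_eq_single k]
    · intro k' _ hk'
      rw [Finset.sum_eq_zero]
      intro h _
      rw [hPj k' hk', zero_mul, mul_zero]
    · intro hmem; exact absurd (Finset.mem_univ k) hmem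
  -- step 5 : only h = -1 survives
  have hKval : K m (lam k) (lam k) (-1 : ZMod m) 0 = lam k ^ (m - 1) := by
    have h1 : ((0 : ZMod m) - (-1)) = (1 : ZMod m) := by ring
    have hr : (1 : ZMod m).val < m := ZMod.val_lt _
    show lam k ^ (m - 1 - ((0 : ZMod m) - (-1)).val) * lam k ^ (((0 : ZMod m) - (-1)).val)
      = lam k ^ (m - 1)
    rw [h1, ← pow_add]
    congr 1
    omega
  have step5 : ∀ j : Fin n, (∑ h : ZMod m, Q (0, j) (h, k) * (P k * K m (lam k) (lam k) h 0))
      = Q (0, j) ((-1 : ZMod m), k) * (P k * lam k ^ (m - 1)) := by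
    intro j
    rw [Finset.sum_eq_single (-1 : ZMod m)]
    · rw [hKval]
    · intro h _ hh
      have hQ0 : Q (0, j) (h, k) = 0 := by
        rw [hQ, Qtilde, Matrix.of_apply]
        exact if_neg (fun hcon : (0 : ZMod m) = h + 1 => hh (by linear_combination -hcon))
      rw [hQ0, zero_mul]
    · intro hmem; exact absurd (Finset.mem_univ (-1 : ZMod m)) hmem
  rw [step1, Finset.sum_congr rfl fun j _ => by rw [step2 j, step4 j, step5 j]]
  rw [← Finset.mul_sum]
  congr 1
  rw [Finset.sum_congr rfl fun j _ => mul_comm (Q (0, j) ((-1 : ZMod m), k))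
    (P k * lam k ^ (m - 1)), ← Finset.mul_sum]

end CfunProof


/-- For every `k`,
`C(λₖ) = (|g| · A′(λₖ)/m) · Σ_{j} Q̃_{(0,j),(m−1,k)}`; in particular, if `|g| ≠ 0`, then
`C(λₖ)/(|g|·A′(λₖ)) = (1/m)·Σ_{j} Q̃_{(0,j),(m−1,k)}`. -/
theorem Cfun_at_eigenvalue (m n : ℕ) [NeZero m] (hn : 0 < n)
    (lam phi : Fin n → ℂ) (g : ZMod m → ℂ)
    (hlam : ∀ j, lam j ≠ 0)
    (hsep : ∀ j k : Fin n, j ≠ k → lam j ^ m ≠ lam k ^ m) (k : Fin n) :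
    Cfun m n g lam phi (lam k) =
      gAbs m g * deriv (Afun m n lam) (lam k) / (m : ℂ) *
        ∑ j : Fin n, Qtilde m n g lam phi (0, j) ((m : ZMod m) - 1, k) ∧
    (gAbs m g ≠ 0 →
      Cfun m n g lam phi (lam k) / (gAbs m g * deriv (Afun m n lam) (lam k)) =
        (1 / (m : ℂ)) * ∑ j : Fin n, Qtilde m n g lam phi (0, j) ((m : ZMod m) - 1, k)) := by
  have hmne : ((m : ZMod m) - 1 : ZMod m) = -1 := by rw [ZMod.natCast_self, zero_sub]
  have hC := congrFun (CfunProof.Cfun_eq_Ffun (m := m) (n := n) g lam phi) (lam k)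
  have hval := CfunProof.Ffun_at (m := m) (n := n) g lam phi k
  have hder := CfunProof.deriv_Afun (m := m) lam k
  have hm0 : (m : ℂ) ≠ 0 := Nat.cast_ne_zero.mpr (NeZero.ne m)
  have hPne : (∏ l ∈ Finset.univ.erase k, (lam k ^ m - lam l ^ m)) ≠ 0 :=
    Finset.prod_ne_zero_iff.mpr fun l hl =>
      sub_ne_zero.mpr (hsep k l (Ne.symm (Finset.mem_erase.mp hl).1))
  have hlk : lam k ^ (m - 1) ≠ 0 := pow_ne_zero _ (hlam k)
  rw [hmne]
  constructor
  · rw [hC, hval, hder]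
    field_simp
  · intro hg
    rw [hC, hval, hder]
    field_simp
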